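/- Let 𝒜 ⊆ ℝ^d, ℬ ⊆ ℝ^k, 𝒞 ⊆ 𝒜, let f : ℝ^d → ℝ^k be measurable and 𝒞 measurable. Let 𝒳 be the family of all random vectors X in ℝ^d such that Pr{X ∈ 𝒜} = 1 and f(X) is integrable with E[f(X)] ∈ ℬ. Then sup_{X ∈ 𝒳} Pr{X ∈ 𝒞} = max{ P_i : 1 ≤ i ≤ k+1 }, where for each i ∈ {1,…,k+1}, P_i = sup{ Σ_{ℓ=1}^{i} θ_ℓ : θ_ℓ ≥ 0 for 1 ≤ ℓ ≤ k+1, y_ℓ ∈ 𝒞 for 1 ≤ ℓ ≤ i, y_ℓ ∈ 𝒜 \ 𝒞 for i < ℓ ≤ k+1, Σ_{ℓ=1}^{k+1} θ_ℓ = 1, Σ_{ℓ=1}^{k+1} θ_ℓ f(y_ℓ) ∈ ℬ }. -/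

import Mathlib

open MeasureTheory ProbabilityTheory Set Filter

section Aux

/-- Proper separation of `0` from a nonempty convex set in a finite-dimensional space. -/
lemma exists_proper_sep {E : Type} [NormedAddCommGroup E] [NormedSpace ℝ E]
    [FiniteDimensional ℝ E] {C : Set E} (hC : Convex ℝ C) (hne : C.Nonempty)
    (h0 : (0:E) ∉ C) :
    ∃ φ : E →L[ℝ] ℝ, (∀ x ∈ C, φ x ≤ 0) ∧ ∃ x₀ ∈ C, φ x₀ < 0 := by
  by_cases hcl : (0:E) ∈ closure C
  · set W := Submodule.span ℝ C with hW
    have hCW : C ⊆ (W : Set E) := Submodule.subset_span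
    set C' : Set ↥W := (fun x : ↥W => (x : E)) ⁻¹' C with hC'def
    have hC'im : Subtype.val '' C' = C := by
      apply Set.Subset.antisymm
      · rintro x ⟨y, hy, rfl⟩; exact hy
      · intro x hx; exact ⟨⟨x, hCW hx⟩, hx, rfl⟩
    have hC'conv : Convex ℝ C' := hC.linear_preimage W.subtype
    have h0C' : (0 : ↥W) ∉ C' := by
      intro h; exact h0 h
    have h0cl : (0 : ↥W) ∈ closure C' := by
      rw [closure_subtype]
      simpa [hC'im] using hcl
    obtain ⟨c, hcC⟩ : C'.Nonempty := by
      obtain ⟨x, hx⟩ := hne; exact ⟨⟨x, hCW hx⟩, hx⟩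
    -- C' is contained in its vectorSpan
    have hCvs : C' ⊆ (vectorSpan ℝ C' : Set ↥W) := by
      intro z hz
      have hclosed : IsClosed ((vectorSpan ℝ C' : Submodule ℝ ↥W) : Set ↥W) :=
        Submodule.closed_of_finiteDimensional _
      have : z ∈ closure ((vectorSpan ℝ C' : Submodule ℝ ↥W) : Set ↥W) := by
        rw [Metric.mem_closure_iff]
        intro ε hε
        obtain ⟨x, hxC, hxd⟩ := Metric.mem_closure_iff.mp h0cl ε hε
        refine ⟨z - x, ?_, ?_⟩
        · have := vsub_mem_vectorSpan ℝ hz hxC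
          simpa using this
        · simpa [dist_eq_norm, dist_eq_norm] using hxd
      rwa [hclosed.closure_eq] at this
    -- span of C' is ⊤
    have hspan : Submodule.span ℝ C' = ⊤ := by
      apply Submodule.map_injective_of_injective W.injective_subtype
      rw [Submodule.map_span, Submodule.map_subtype_top]
      show Submodule.span ℝ (Subtype.val '' C') = W
      rw [hC'im]
    have hvs : vectorSpan ℝ C' = ⊤ := by
      rw [eq_top_iff, ← hspan]
      exact Submodule.span_le.mpr hCvs
    -- affine span is ⊤
    have haff : affineSpan ℝ C' = ⊤ := by
      rw [eq_top_iff]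
      intro x _
      have hdir : x - c ∈ (affineSpan ℝ C').direction := by
        rw [direction_affineSpan, hvs]; trivial
      have hc' : c ∈ affineSpan ℝ C' := subset_affineSpan ℝ C' hcC
      have := AffineSubspace.vadd_mem_of_mem_direction hdir hc'
      simpa using this
    -- interior of C' is nonempty
    obtain ⟨c₀, hc₀⟩ : (interior C').Nonempty :=
      hC'conv.interior_nonempty_iff_affineSpan_eq_top.mpr haff
    obtain ⟨ψ, hψ⟩ := geometric_hahn_banach_open_point hC'conv.interior isOpen_interior
      (fun h => h0C' (interior_subset h))
    rw [map_zero] at hψ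
    -- ψ ≤ 0 on C'
    have key : ∀ x ∈ C', ψ x ≤ 0 := by
      intro x hx
      have hterm : ∀ j : ℕ, ψ x + (1/(j+1) : ℝ) * (ψ c₀ - ψ x) < 0 := by
        intro j
        have ha : (0:ℝ) ≤ 1 - 1/(j+1) := by
          have h1 : (1/(j+1) : ℝ) ≤ 1 := by
            rw [div_le_one (by positivity)]; simp
          linarith
        have hb : (0:ℝ) < 1/(j+1) := by positivity
        have hmem := hC'conv.combo_closure_interior_mem_interior
          (subset_closure hx) hc₀ ha hb (by ring)
        have := hψ _ hmem
        rw [map_add, ContinuousLinearMap.map_smul, ContinuousLinearMap.map_smul] at this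
        simp only [smul_eq_mul] at this
        nlinarith [this]
      have htend : Tendsto (fun j : ℕ => ψ x + (1/(j+1) : ℝ) * (ψ c₀ - ψ x))
          atTop (nhds (ψ x)) := by
        have h1 : Tendsto (fun j : ℕ => (1/(j+1) : ℝ)) atTop (nhds 0) :=
          tendsto_one_div_add_atTop_nhds_zero_nat
        have h2 := (h1.mul_const (ψ c₀ - ψ x)).const_add (ψ x)
        simpa using h2
      exact le_of_tendsto htend (Eventually.of_forall fun j => (hterm j).le)
    -- extend ψ to E via a projection
    obtain ⟨π, hπ⟩ := Submodule.ClosedComplemented.of_finiteDimensional W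
    refine ⟨ψ.comp π, fun x hx => ?_, ⟨(c₀ : E), ?_, ?_⟩⟩
    · have : π x = ⟨x, hCW hx⟩ := hπ ⟨x, hCW hx⟩
      simp only [ContinuousLinearMap.comp_apply, this]
      exact key _ hx
    · rw [← hC'im]; exact ⟨c₀, interior_subset hc₀, rfl⟩
    · have : π (c₀ : E) = c₀ := hπ c₀
      simp only [ContinuousLinearMap.comp_apply, this]
      exact hψ _ hc₀
  · obtain ⟨φ, u, hu, hu0⟩ := geometric_hahn_banach_closed_point
      (hC.closure) isClosed_closure hcl
    rw [map_zero] at hu0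
    refine ⟨φ, fun x hx => ?_, ?_⟩
    · exact le_of_lt (lt_trans (hu x (subset_closure hx)) hu0)
    · obtain ⟨x₀, hx₀⟩ := hne
      exact ⟨x₀, hx₀, lt_trans (hu x₀ (subset_closure hx₀)) hu0⟩


variable {Ω : Type} [MeasurableSpace Ω] {μ : Measure Ω} [IsProbabilityMeasure μ]

/-- A measurable set disjoint from a set of full (outer) probability is null. -/
lemma null_of_subset_compl {s : Set Ω} (hs : μ s = 1) {t : Set Ω}
    (ht : MeasurableSet t) (hts : t ⊆ sᶜ) : μ t = 0 := by
  have h1 : μ s ≤ μ tᶜ := measure_mono (by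
    intro x hx
    exact fun hxt => hts hxt hx)
  rw [hs, measure_compl ht (measure_ne_top μ t)] at h1
  have h2 : μ t ≤ 1 := prob_le_one
  rw [measure_univ] at h1
  by_contra hne
  have hlt : (1:ENNReal) - μ t < 1 :=
    ENNReal.sub_lt_self (by simp) (by simp) hne
  exact absurd (lt_of_le_of_lt h1 hlt) (lt_irrefl _)

lemma thick_inter {s t : Set Ω} (hs : μ s = 1) (ht : MeasurableSet t)
    (ht1 : μ t = 1) : μ (s ∩ t) = 1 := by
  have h1 : μ s ≤ μ (s ∩ t) + μ (s \ t) := measure_le_inter_add_diff μ s t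
  have h2 : μ (s \ t) ≤ μ tᶜ := measure_mono (fun x hx => hx.2)
  have h3 : μ tᶜ = 0 := (prob_compl_eq_zero_iff ht).mpr ht1
  have h4 : (1:ENNReal) ≤ μ (s ∩ t) := by
    calc (1:ENNReal) = μ s := hs.symm
    _ ≤ μ (s ∩ t) + μ (s \ t) := h1
    _ ≤ μ (s ∩ t) + 0 := by gcongr; rw [← h3]; exact h2
    _ = μ (s ∩ t) := by simp
  exact le_antisymm prob_le_one h4

lemma ae_of_forall_mem {s : Set Ω} (hs : μ s = 1) {P : Ω → Prop}
    (hP : MeasurableSet {ω | P ω}) (h : ∀ ω ∈ s, P ω) : ∀ᵐ ω ∂μ, P ω := by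
  rw [ae_iff]
  exact null_of_subset_compl hs hP.compl (fun ω hω hωs => hω (h ω hωs))

lemma mean_mem_convexHull_aux {n : ℕ} (Z : Ω → (Fin n → ℝ)) (hZm : Measurable Z)
    (hZi : Integrable Z μ) :
    ∀ (r : ℕ) (s : Set Ω), μ s = 1 →
      ∀ U : Submodule ℝ (Fin n → ℝ), Module.finrank ℝ ↥U ≤ r →
      (∀ ω ∈ s, Z ω - (∫ ω, Z ω ∂μ) ∈ U) →
      (∫ ω, Z ω ∂μ) ∈ convexHull ℝ (Z '' s) := by
  intro r
  induction r with
  | zero =>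
    intro s hs U hU hmem
    have hbot : U = ⊥ := Submodule.finrank_eq_zero.mp (Nat.le_zero.mp hU)
    obtain ⟨ω₀, hω₀⟩ : s.Nonempty := by
      rcases s.eq_empty_or_nonempty with h | h
      · exfalso; rw [h, measure_empty] at hs; exact one_ne_zero hs.symm
      · exact h
    have : Z ω₀ - (∫ ω, Z ω ∂μ) = 0 := by
      have := hmem ω₀ hω₀
      rwa [hbot, Submodule.mem_bot] at this
    have hZm0 : (∫ ω, Z ω ∂μ) = Z ω₀ := by
      have := sub_eq_zero.mp this
      exact this.symm
    rw [hZm0]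
    exact subset_convexHull ℝ _ ⟨ω₀, hω₀, rfl⟩
  | succ r IH =>
    intro s hs U hU hmem
    set m := ∫ ω, Z ω ∂μ with hm_def
    by_cases hm : m ∈ convexHull ℝ (Z '' s)
    · exact hm
    · exfalso
      obtain ⟨ω₀, hω₀⟩ : s.Nonempty := by
        rcases s.eq_empty_or_nonempty with h | h
        · exfalso; rw [h, measure_empty] at hs; exact one_ne_zero hs.symm
        · exact h
      set D : Set (Fin n → ℝ) := (fun ω => Z ω - m) '' s with hD_def
      have hDne : D.Nonempty := ⟨Z ω₀ - m, ω₀, hω₀, rfl⟩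
      have h0 : (0 : Fin n → ℝ) ∉ convexHull ℝ D := by
        intro h0
        apply hm
        have himg : D = (fun x => -m + x) '' (Z '' s) := by
          rw [Set.image_image]
          apply Set.image_congr
          intro ω _
          abel
        have hconv : convexHull ℝ D
            = (fun x => -m + x) '' convexHull ℝ (Z '' s) := by
          rw [himg]
          exact ((AffineEquiv.constVAdd ℝ (Fin n → ℝ) (-m)).toAffineMap.image_convexHull
            (Z '' s)).symm
        rw [hconv] at h0
        obtain ⟨x, hx, hx0⟩ := h0
        have : x = m := by
          have : -m + x = 0 := hx0
          linear_combination (norm := abel1) this -- might fail; fallback below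
        rwa [← this]
      obtain ⟨φ, hφle, x₀, hx₀C, hx₀⟩ :=
        exists_proper_sep (convex_convexHull ℝ D) (hDne.mono (subset_convexHull ℝ D)) h0
      have hCU : convexHull ℝ D ⊆ (U : Set (Fin n → ℝ)) := by
        apply convexHull_min
        · rintro x ⟨ω, hω, rfl⟩; exact hmem ω hω
        · exact U.convex
      -- integral facts
      have hintφ : Integrable (fun ω => φ (Z ω)) μ := φ.integrable_comp hZi
      have hmean : ∫ ω, φ (Z ω) ∂μ = φ m := φ.integral_comp_comm hZi
      have hmeasφ : Measurable fun ω => φ (Z ω) := φ.continuous.measurable.comp hZm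
      have hae_le : ∀ᵐ ω ∂μ, φ (Z ω) ≤ φ m := by
        apply ae_of_forall_mem hs (measurableSet_le hmeasφ measurable_const)
        intro ω hω
        have : φ (Z ω - m) ≤ 0 :=
          hφle _ (subset_convexHull ℝ D ⟨ω, hω, rfl⟩)
        rw [map_sub] at this
        linarith
      have haeeq : ∀ᵐ ω ∂μ, φ m - φ (Z ω) = 0 := by
        have hg_int : Integrable (fun ω => φ m - φ (Z ω)) μ :=
          (integrable_const (φ m)).sub hintφ
        have hg_nonneg : 0 ≤ᵐ[μ] fun ω => φ m - φ (Z ω) := by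
          filter_upwards [hae_le] with ω hω
          simp only [Pi.zero_apply]
          linarith
        have hg_zero : ∫ ω, (φ m - φ (Z ω)) ∂μ = 0 := by
          rw [integral_sub (integrable_const _) hintφ, hmean, integral_const]
          simp
        have := (integral_eq_zero_iff_of_nonneg_ae hg_nonneg hg_int).mp hg_zero
        filter_upwards [this] with ω hω
        exact hω
      set t : Set Ω := {ω | φ (Z ω) = φ m} with ht_def
      have ht_meas : MeasurableSet t := hmeasφ (measurableSet_singleton (φ m))
      have ht1 : μ t = 1 := by
        rw [← prob_compl_eq_zero_iff ht_meas]
        apply measure_mono_null _ (ae_iff.mp haeeq)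
        intro ω hω
        simp only [ht_def, Set.mem_compl_iff, Set.mem_setOf_eq] at hω ⊢
        intro hc
        exact hω (by linarith)
      have hs' : μ (s ∩ t) = 1 := thick_inter hs ht_meas ht1
      set U' := U ⊓ LinearMap.ker (φ : (Fin n → ℝ) →ₗ[ℝ] ℝ) with hU'_def
      have hU'lt : U' < U := by
        apply lt_of_le_of_ne inf_le_left
        intro heq
        have hx₀U : x₀ ∈ U := hCU hx₀C
        have : x₀ ∈ U' := by rw [hU'_def, heq]; exact hx₀U
        have : φ x₀ = 0 := this.2
        linarith
      have hU'r : Module.finrank ℝ ↥U' ≤ r := by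
        have := Submodule.finrank_lt_finrank_of_lt hU'lt
        omega
      have hmem' : ∀ ω ∈ s ∩ t, Z ω - m ∈ U' := by
        rintro ω ⟨hω, hωt⟩
        refine ⟨hmem ω hω, ?_⟩
        have hφz : φ (Z ω) = φ m := hωt
        have : φ (Z ω - m) = 0 := by rw [map_sub, hφz, sub_self]
        exact LinearMap.mem_ker.mpr this
      have := IH (s ∩ t) hs' U' hU'r hmem'
      exact hm (convexHull_mono (Set.image_mono Set.inter_subset_left) this)

lemma mean_mem_convexHull {n : ℕ} {Z : Ω → (Fin n → ℝ)} (hZm : Measurable Z)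
    (hZi : Integrable Z μ) {s : Set Ω} (hs : μ s = 1) :
    (∫ ω, Z ω ∂μ) ∈ convexHull ℝ (Z '' s) :=
  mean_mem_convexHull_aux Z hZm hZi (Module.finrank ℝ ↥(⊤ : Submodule ℝ (Fin n → ℝ))) s hs ⊤
    (le_refl _) (fun _ _ => Submodule.mem_top)


lemma sum_dite_fin {M : Type} [AddCommMonoid M] {n r : ℕ} (h : r ≤ n + 1) (G : Fin r → M) :
    (∑ j : Fin (n+1), if h' : (j:ℕ) < r then G ⟨j, h'⟩ else 0) = ∑ i : Fin r, G i := by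
  set G' : ℕ → M := fun jn => if h' : jn < r then G ⟨jn, h'⟩ else 0 with hG'
  have l1 : (∑ j : Fin (n+1), if h' : (j:ℕ) < r then G ⟨j, h'⟩ else 0)
      = ∑ jn ∈ Finset.range (n+1), G' jn := by
    rw [Fin.sum_univ_eq_sum_range G' (n+1)]
  have l2 : ∑ jn ∈ Finset.range (n+1), G' jn = ∑ jn ∈ Finset.range r, G' jn := by
    symm
    apply Finset.sum_subset (Finset.range_subset_range.mpr (by omega))
    intro x _ hx
    rw [Finset.mem_range] at hx
    simp only [hG', dif_neg hx]
  have l3 : ∑ jn ∈ Finset.range r, G' jn = ∑ i : Fin r, G i := by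
    rw [← Fin.sum_univ_eq_sum_range G' r]
    apply Finset.sum_congr rfl
    intro i _
    simp only [hG', Fin.is_lt, dif_pos, Fin.eta]
  rw [l1, l2, l3]

lemma enum_helper {n : ℕ} {E : Type} [AddCommGroup E] [Module ℝ E] (T : Set E)
    (u : Finset E) (huT : ↑u ⊆ T) (hcard : u.card ≤ n + 1) (w : E → ℝ)
    (hw0 : ∀ x ∈ u, 0 ≤ w x) (hw1 : ∑ x ∈ u, w x = 1) :
    ∃ (θ : Fin (n+1) → ℝ) (z : Fin (n+1) → E),
      (∀ j, 0 ≤ θ j) ∧ (∀ j, z j ∈ T) ∧ (∑ j, θ j) = 1 ∧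
      (∑ j, θ j • z j) = ∑ x ∈ u, w x • x := by
  have hune : u.Nonempty := by
    rcases u.eq_empty_or_nonempty with h | h
    · exfalso; rw [h, Finset.sum_empty] at hw1; exact one_ne_zero hw1.symm
    · exact h
  obtain ⟨xbar, hxbar⟩ := hune
  set e := u.equivFin.symm with he
  set θ : Fin (n+1) → ℝ := fun j => if h : (j:ℕ) < u.card then w ↑(e ⟨j, h⟩) else 0 with hθ
  set z : Fin (n+1) → E := fun j => if h : (j:ℕ) < u.card then (e ⟨j, h⟩ : E) else xbar with hz
  have hθj : ∀ (j : Fin (n+1)) (h : (j:ℕ) < u.card), θ j = w ↑(e ⟨j, h⟩) := by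
    intro j h; simp only [hθ, dif_pos h]
  have hθj' : ∀ (j : Fin (n+1)), ¬ (j:ℕ) < u.card → θ j = 0 := by
    intro j h; simp only [hθ, dif_neg h]
  have hzj : ∀ (j : Fin (n+1)) (h : (j:ℕ) < u.card), z j = (e ⟨j, h⟩ : E) := by
    intro j h; simp only [hz, dif_pos h]
  refine ⟨θ, z, ?_, ?_, ?_, ?_⟩
  · intro j
    by_cases h : (j:ℕ) < u.card
    · rw [hθj j h]; exact hw0 _ (e ⟨j, h⟩).2
    · rw [hθj' j h]
  · intro j
    by_cases h : (j:ℕ) < u.card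
    · rw [hzj j h]; exact huT (e ⟨j, h⟩).2
    · simp only [hz, dif_neg h]; exact huT hxbar
  · have l1 : (∑ j : Fin (n+1), θ j)
        = ∑ j : Fin (n+1), (if h : (j:ℕ) < u.card then (fun i : Fin u.card => w ↑(e i)) ⟨j, h⟩ else 0) := rfl
    rw [l1, sum_dite_fin hcard (fun i : Fin u.card => w ↑(e i)),
      Equiv.sum_comp e (fun x : ↥u => w ↑x), Finset.sum_coe_sort u w]
    exact hw1
  · have l1 : (∑ j : Fin (n+1), θ j • z j)
        = ∑ j : Fin (n+1), (if h : (j:ℕ) < u.card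
            then (fun i : Fin u.card => w ↑(e i) • (e i : E)) ⟨j, h⟩ else 0) := by
      apply Finset.sum_congr rfl
      intro j _
      by_cases h : (j:ℕ) < u.card
      · rw [hθj j h, hzj j h, dif_pos h]
      · rw [hθj' j h, dif_neg h, zero_smul]
    rw [l1, sum_dite_fin hcard (fun i : Fin u.card => w ↑(e i) • (e i : E)),
      Equiv.sum_comp e (fun x : ↥u => w ↑x • (x : E)),
      Finset.sum_coe_sort u (fun x => w x • x)]

lemma caratheodory_slide {n : ℕ} (T : Set (Fin (n+1) → ℝ)) (m : Fin (n+1) → ℝ)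
    (hm : m ∈ convexHull ℝ T) :
    ∃ (θ : Fin (n+1) → ℝ) (z : Fin (n+1) → (Fin (n+1) → ℝ)),
      (∀ j, 0 ≤ θ j) ∧ (∀ j, z j ∈ T) ∧ (∑ j, θ j) = 1 ∧
      (∀ i : Fin (n+1), i ≠ Fin.last n → (∑ j, θ j • z j) i = m i) ∧
      m (Fin.last n) ≤ (∑ j, θ j • z j) (Fin.last n) := by
  rw [convexHull_eq_union] at hm
  obtain ⟨t, hmem⟩ := Set.mem_iUnion.mp hm
  obtain ⟨htT, hmem⟩ := Set.mem_iUnion.mp hmem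
  obtain ⟨hai, hmt⟩ := Set.mem_iUnion.mp hmem
  rw [Finset.convexHull_eq] at hmt
  obtain ⟨w, hw0, hw1, hcm⟩ := hmt
  rw [Finset.centerMass_eq_of_sum_1 _ _ hw1] at hcm
  simp only [id] at hcm
  have hcard : t.card ≤ n + 2 := by
    have h1 := hai.card_le_finrank_succ
    rw [Fintype.card_coe] at h1
    refine h1.trans ?_
    have h2 := Submodule.finrank_le
      (vectorSpan ℝ (Set.range (Subtype.val : ↥t → (Fin (n+1) → ℝ))))
    rw [Module.finrank_fin_fun] at h2
    have : n + 2 = (n + 1) + 1 := rfl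
    rw [this]
    exact Nat.add_le_add_right h2 1
  rcases Nat.lt_or_ge t.card (n+2) with hlt | hge
  · obtain ⟨θ, z, h0, hT, h1, heq⟩ := enum_helper (n := n) T t htT (by omega) w hw0 hw1
    exact ⟨θ, z, h0, hT, h1, fun i _ => by rw [heq, hcm], le_of_eq (by rw [heq, hcm])⟩
  · have hcard2 : t.card = n + 2 := le_antisymm hcard hge
    -- reindex the points of t by Fin (n+2)
    have e : Fin (n+2) ≃ ↥t := (Fintype.equivFinOfCardEq (by rw [Fintype.card_coe, hcard2])).symm
    set p : Fin (n+2) → (Fin (n+1) → ℝ) := fun i => ((e i : ↥t) : Fin (n+1) → ℝ) with hp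
    have hpt : ∀ i, p i ∈ t := fun i => (e i).2
    have hai' : AffineIndependent ℝ p := hai.comp_embedding e.toEmbedding
    set w' : Fin (n+2) → ℝ := fun i => w (p i) with hw'
    have hw'0 : ∀ i, 0 ≤ w' i := fun i => hw0 _ (hpt i)
    have hw'1 : ∑ i, w' i = 1 := by
      rw [hw']
      rw [show (∑ i : Fin (n+2), w (p i)) = ∑ x : ↥t, w ↑x from
        Equiv.sum_comp e (fun x : ↥t => w ↑x)]
      rw [Finset.sum_coe_sort t w]; exact hw1
    have hsum : ∑ i, w' i • p i = m := by
      rw [show (∑ i : Fin (n+2), w' i • p i) = ∑ x : ↥t, w ↑x • (x : Fin (n+1) → ℝ) from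
        Equiv.sum_comp e (fun x : ↥t => w ↑x • (x : Fin (n+1) → ℝ))]
      rw [Finset.sum_coe_sort t (fun x => w x • x)]; exact hcm
    -- linear independence of differences
    have hli := (affineIndependent_iff_linearIndependent_vsub ℝ p 0).mp hai'
    set q : Fin (n+1) → {x : Fin (n+2) // x ≠ 0} := fun i => ⟨i.succ, Fin.succ_ne_zero i⟩ with hq
    have hqinj : Function.Injective q := by
      intro a b hab
      have : a.succ = b.succ := congrArg Subtype.val hab
      exact Fin.succ_injective _ this
    have hli2 : LinearIndependent ℝ (fun i : Fin (n+1) => p (i.succ) - p 0) := by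
      have := hli.comp q hqinj
      exact this
    have hspan : Submodule.span ℝ (Set.range (fun i : Fin (n+1) => p (i.succ) - p 0)) = ⊤ :=
      hli2.span_eq_top_of_card_eq_finrank
        (by rw [Fintype.card_fin, Module.finrank_fin_fun])
    set v : Fin (n+1) → ℝ := Pi.single (Fin.last n) 1 with hv
    obtain ⟨a, ha⟩ := Submodule.mem_span_range_iff_exists_fun ℝ |>.mp (hspan ▸ Submodule.mem_top (x := v))
    set c : Fin (n+2) → ℝ := Fin.cons (-∑ i, a i) a with hc
    have hc0 : c 0 = -∑ i, a i := by rw [hc]; exact Fin.cons_zero _ _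
    have hcsucc : ∀ i : Fin (n+1), c i.succ = a i := fun i => by rw [hc]; exact Fin.cons_succ _ _ _
    have hc_sum : ∑ j, c j = 0 := by
      rw [Fin.sum_univ_succ, hc0]
      have : ∑ i : Fin (n+1), c i.succ = ∑ i : Fin (n+1), a i :=
        Finset.sum_congr rfl (fun i _ => hcsucc i)
      rw [this]; ring
    have hc_comb : ∑ j, c j • p j = v := by
      rw [Fin.sum_univ_succ, hc0]
      have : ∑ i : Fin (n+1), c i.succ • p i.succ = ∑ i : Fin (n+1), a i • p i.succ :=
        Finset.sum_congr rfl (fun i _ => by rw [hcsucc i])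
      rw [this, ← ha]
      rw [show (∑ i : Fin (n+1), a i • (p i.succ - p 0))
          = (∑ i : Fin (n+1), a i • p i.succ) - (∑ i : Fin (n+1), a i • p 0) from by
        simp [smul_sub, Finset.sum_sub_distrib]]
      rw [← Finset.sum_smul, neg_smul]
      abel
    have hcneg : ∃ j, c j < 0 := by
      by_contra hno
      push_neg at hno
      have hall : ∀ j ∈ Finset.univ, c j = 0 :=
        (Finset.sum_eq_zero_iff_of_nonneg (fun j _ => hno j)).mp hc_sum
      have hv0 : v = 0 := by
        rw [← hc_comb]
        apply Finset.sum_eq_zero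
        intro j _
        rw [hall j (Finset.mem_univ j), zero_smul]
      have := congrFun hv0 (Fin.last n)
      rw [hv] at this
      simp [Pi.single_eq_same] at this
    set J := Finset.univ.filter (fun j => c j < 0) with hJ
    have hJne : J.Nonempty := by
      obtain ⟨j, hj⟩ := hcneg
      exact ⟨j, Finset.mem_filter.mpr ⟨Finset.mem_univ j, hj⟩⟩
    obtain ⟨j₀, hj₀J, hj₀min⟩ := Finset.exists_min_image J (fun j => w' j / (-c j)) hJne
    have hcj₀ : c j₀ < 0 := (Finset.mem_filter.mp hj₀J).2
    set tstar : ℝ := w' j₀ / (-c j₀) with htstar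
    have ht0 : 0 ≤ tstar := div_nonneg (hw'0 j₀) (by linarith)
    set θ : Fin (n+2) → ℝ := fun j => w' j + tstar * c j with hθ
    have hθ0 : ∀ j, 0 ≤ θ j := by
      intro j
      rcases lt_or_ge (c j) 0 with h | h
      · have hjJ : j ∈ J := Finset.mem_filter.mpr ⟨Finset.mem_univ j, h⟩
        have hmin := hj₀min j hjJ
        have : tstar * (-c j) ≤ w' j := by
          rw [← le_div_iff₀ (by linarith : (0:ℝ) < -c j)]
          exact hmin
        simp only [hθ]; nlinarith
      · simp only [hθ]
        exact add_nonneg (hw'0 j) (mul_nonneg ht0 h)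
    have hθj₀ : θ j₀ = 0 := by
      have hne : c j₀ ≠ 0 := ne_of_lt hcj₀
      have hkey : w' j₀ / -c j₀ * c j₀ = -w' j₀ := by
        rw [div_mul_eq_mul_div, div_neg, mul_div_assoc, div_self hne, mul_one]
      simp only [hθ, htstar, hkey]
      ring
    have hθsum : ∑ j, θ j = 1 := by
      simp only [hθ]
      rw [Finset.sum_add_distrib, ← Finset.mul_sum, hc_sum, hw'1]; ring
    have hθcomb : ∑ j, θ j • p j = m + tstar • v := by
      simp only [hθ, add_smul]
      rw [Finset.sum_add_distrib, hsum]
      congr 1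
      rw [← hc_comb, Finset.smul_sum]
      apply Finset.sum_congr rfl
      intro j _
      rw [mul_smul]
    -- drop index j₀
    refine ⟨θ ∘ j₀.succAbove, p ∘ j₀.succAbove, fun j => hθ0 _, fun j => htT (hpt _), ?_, ?_, ?_⟩
    · have := Fin.sum_univ_succAbove θ j₀
      rw [hθsum, hθj₀, zero_add] at this
      exact this.symm
    · intro i hi
      have hs := Fin.sum_univ_succAbove (fun j => θ j • p j) j₀
      rw [hθcomb, hθj₀, zero_smul, zero_add] at hs
      have : (∑ j : Fin (n+1), (θ ∘ j₀.succAbove) j • (p ∘ j₀.succAbove) j) = m + tstar • v :=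
        hs.symm
      rw [this]
      simp only [Pi.add_apply, Pi.smul_apply, smul_eq_mul, hv]
      rw [Pi.single_eq_of_ne hi]
      ring
    · have hs := Fin.sum_univ_succAbove (fun j => θ j • p j) j₀
      rw [hθcomb, hθj₀, zero_smul, zero_add] at hs
      have : (∑ j : Fin (n+1), (θ ∘ j₀.succAbove) j • (p ∘ j₀.succAbove) j) = m + tstar • v :=
        hs.symm
      rw [this]
      simp only [Pi.add_apply, Pi.smul_apply, smul_eq_mul, hv]
      rw [Pi.single_eq_same]
      nlinarith


lemma sort_perm {k : ℕ} {α : Type} (A C : Set α) (θ : Fin (k+1) → ℝ) (y : Fin (k+1) → α)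
    (hyA : ∀ j, y j ∈ A) [DecidablePred (· ∈ C)]
    (hne : (Finset.univ.filter (fun j => y j ∈ C)).Nonempty) :
    ∃ (i : Fin (k+1)) (σ : Fin (k+1) → Fin (k+1)), Function.Bijective σ ∧
      (∀ ℓ, ℓ ≤ i → y (σ ℓ) ∈ C) ∧ (∀ ℓ, i < ℓ → y (σ ℓ) ∈ A \ C) ∧
      (∑ ℓ ∈ Finset.Iic i, θ (σ ℓ)) = ∑ j ∈ Finset.univ.filter (fun j => y j ∈ C), θ j := by
  classical
  set J := Finset.univ.filter (fun j => y j ∈ C) with hJ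
  set cnt := J.card with hcnt
  have hcnt1 : 1 ≤ cnt := Finset.card_pos.mpr hne
  have hcntk : cnt ≤ k + 1 := by
    have := Finset.card_le_univ J
    rwa [Fintype.card_fin] at this
  rcases Nat.lt_or_ge cnt (k+1) with hlt | hge
  · -- 1 ≤ cnt ≤ k
    have hJc : (Jᶜ : Finset (Fin (k+1))).card = k + 1 - cnt := by
      rw [Finset.card_compl, Fintype.card_fin]
    set i : Fin (k+1) := ⟨cnt - 1, by omega⟩ with hi
    have eJ : Fin cnt ≃ ↥J := (finCongr hcnt).trans J.equivFin.symm
    have eC : Fin (k+1-cnt) ≃ ↥(Jᶜ) := (finCongr hJc.symm).trans (Jᶜ).equivFin.symm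
    set σ : Fin (k+1) → Fin (k+1) := fun ℓ =>
      if h : (ℓ:ℕ) < cnt then (↑(eJ ⟨ℓ.val, h⟩) : Fin (k+1))
      else ↑(eC ⟨ℓ.val - cnt, by have := ℓ.isLt; omega⟩) with hσ
    have hmemJ : ∀ (ℓ : Fin (k+1)) (h : (ℓ:ℕ) < cnt), σ ℓ ∈ J := by
      intro ℓ h
      simp only [hσ, dif_pos h]
      exact (eJ ⟨ℓ.val, h⟩).2
    have hmemJc : ∀ (ℓ : Fin (k+1)), ¬ (ℓ:ℕ) < cnt → σ ℓ ∈ Jᶜ := by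
      intro ℓ h
      simp only [hσ, dif_neg h]
      exact (eC _).2
    have hinj : Function.Injective σ := by
      intro a b hab
      by_cases ha : (a:ℕ) < cnt <;> by_cases hb : (b:ℕ) < cnt
      · simp only [hσ, dif_pos ha, dif_pos hb] at hab
        have := eJ.injective (Subtype.val_injective hab)
        have := congrArg Fin.val this
        exact Fin.ext (by simpa using this)
      · exfalso
        have h1 := hmemJ a ha
        have h2 := hmemJc b hb
        rw [hab] at h1
        exact (Finset.mem_compl.mp h2) h1
      · exfalso
        have h1 := hmemJ b hb
        have h2 := hmemJc a ha
        rw [← hab] at h1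
        exact (Finset.mem_compl.mp h2) h1
      · simp only [hσ, dif_neg ha, dif_neg hb] at hab
        have := eC.injective (Subtype.val_injective hab)
        have := congrArg Fin.val this
        simp only at this
        exact Fin.ext (by omega)
    have hbij : Function.Bijective σ := Finite.injective_iff_bijective.mp hinj
    have hle_iff : ∀ ℓ : Fin (k+1), ℓ ≤ i ↔ (ℓ:ℕ) < cnt := by
      intro ℓ
      rw [Fin.le_def]
      simp only [hi]
      omega
    refine ⟨i, σ, hbij, ?_, ?_, ?_⟩
    · intro ℓ hℓ
      have := hmemJ ℓ ((hle_iff ℓ).mp hℓ)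
      rw [hJ, Finset.mem_filter] at this
      exact this.2
    · intro ℓ hℓ
      have hnot : ¬ (ℓ:ℕ) < cnt := by
        intro h
        exact absurd ((hle_iff ℓ).mpr h) (not_le_of_gt hℓ)
      have := hmemJc ℓ hnot
      rw [Finset.mem_compl, hJ, Finset.mem_filter] at this
      push_neg at this
      exact ⟨hyA _, this (Finset.mem_univ _)⟩
    · apply Finset.sum_bij (i := fun ℓ (_ : ℓ ∈ Finset.Iic i) => σ ℓ)
      · intro ℓ hℓ
        exact hmemJ ℓ ((hle_iff ℓ).mp (Finset.mem_Iic.mp hℓ))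
      · intro a _ b _ hab
        exact hinj hab
      · intro b hb
        obtain ⟨a, ha⟩ := hbij.2 b
        have hac : (a:ℕ) < cnt := by
          by_contra hnot
          have := hmemJc a hnot
          rw [ha] at this
          exact (Finset.mem_compl.mp this) hb
        exact ⟨a, Finset.mem_Iic.mpr ((hle_iff a).mpr hac), ha⟩
      · intro ℓ _
        rfl
  · -- cnt = k+1 : everything is in C
    have hJuniv : J = Finset.univ := Finset.eq_univ_of_card J (by
      rw [Fintype.card_fin]; omega)
    refine ⟨Fin.last k, id, Function.bijective_id, ?_, ?_, ?_⟩
    · intro ℓ _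
      have : ℓ ∈ J := hJuniv ▸ Finset.mem_univ ℓ
      rw [hJ, Finset.mem_filter] at this
      exact this.2
    · intro ℓ hℓ
      exact absurd (Fin.le_last ℓ) (not_le_of_gt hℓ)
    · have hIic : Finset.Iic (Fin.last k) = Finset.univ :=
        Finset.eq_univ_of_forall (fun ℓ => Finset.mem_Iic.mpr (Fin.le_last ℓ))
      rw [hIic, hJuniv]
      rfl


lemma discrete_member {d k : ℕ} (A : Set (Fin d → ℝ)) (B : Set (Fin k → ℝ))
    (C : Set (Fin d → ℝ)) (f : (Fin d → ℝ) → (Fin k → ℝ))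
    (i : Fin (k+1)) (θ : Fin (k+1) → ℝ) (y : Fin (k+1) → (Fin d → ℝ))
    (hθ0 : ∀ ℓ, 0 ≤ θ ℓ) (hyC : ∀ ℓ, ℓ ≤ i → y ℓ ∈ C) (hyAC : ∀ ℓ, i < ℓ → y ℓ ∈ A \ C)
    (hCA : C ⊆ A)
    (hθ1 : (∑ ℓ, θ ℓ) = 1) (hB : (∑ ℓ, θ ℓ • f (y ℓ)) ∈ B) :
    ∃ (Ω : Type) (_ : MeasurableSpace Ω) (μ : Measure Ω),
        IsProbabilityMeasure μ ∧ ∃ X : Ω → (Fin d → ℝ), Measurable X ∧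
        μ {ω | X ω ∈ A} = 1 ∧ Integrable (fun ω => f (X ω)) μ ∧
        (∫ ω, f (X ω) ∂μ) ∈ B ∧ (∑ ℓ ∈ Finset.Iic i, θ ℓ) = (μ {ω | X ω ∈ C}).toReal := by
  classical
  letI m0 : MeasurableSpace (Fin (k+1)) := ⊤
  haveI hsc : MeasurableSingletonClass (Fin (k+1)) := ⟨fun _ => trivial⟩
  set μ : Measure (Fin (k+1)) := ∑ ℓ ∈ Finset.univ, ENNReal.ofReal (θ ℓ) • Measure.dirac ℓ
    with hμ
  have hμapp : ∀ S : Set (Fin (k+1)),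
      μ S = ∑ ℓ, ENNReal.ofReal (θ ℓ) * S.indicator 1 ℓ := by
    intro S
    rw [hμ, Measure.finset_sum_apply]
    apply Finset.sum_congr rfl
    intro ℓ _
    rw [Measure.smul_apply, Measure.dirac_apply' _ MeasurableSpace.measurableSet_top,
      smul_eq_mul]
  have hμuniv : μ Set.univ = 1 := by
    rw [hμapp]
    simp only [Set.indicator_univ, Pi.one_apply, mul_one]
    rw [← ENNReal.ofReal_sum_of_nonneg (fun ℓ _ => hθ0 ℓ), hθ1, ENNReal.ofReal_one]
  haveI hprob : IsProbabilityMeasure μ := ⟨hμuniv⟩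
  have hyA : ∀ ℓ, y ℓ ∈ A := by
    intro ℓ
    rcases le_or_gt ℓ i with h | h
    · exact hCA (hyC ℓ h)
    · exact (hyAC ℓ h).1
  have hint : ∀ (g : (Fin (k+1)) → (Fin k → ℝ)), Integrable g μ := by
    intro g
    exact Integrable.of_finite
  have hintegral : ∀ (g : (Fin (k+1)) → (Fin k → ℝ)),
      (∫ ω, g ω ∂μ) = ∑ ℓ, θ ℓ • g ℓ := by
    intro g
    rw [hμ, integral_finset_sum_measure (fun ℓ _ => by
      exact (Integrable.of_finite).smul_measure ENNReal.ofReal_ne_top)]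
    apply Finset.sum_congr rfl
    intro ℓ _
    rw [integral_smul_measure, integral_dirac, ENNReal.toReal_ofReal (hθ0 ℓ)]
  refine ⟨Fin (k+1), m0, μ, hprob, y, measurable_from_top, ?_, hint _, ?_, ?_⟩
  · have : {ω : Fin (k+1) | y ω ∈ A} = Set.univ := Set.eq_univ_of_forall (fun ℓ => hyA ℓ)
    rw [this, hμuniv]
  · rw [hintegral]
    exact hB
  · have hset : {ω : Fin (k+1) | y ω ∈ C} = {ℓ : Fin (k+1) | ℓ ≤ i} := by
      ext ℓ
      simp only [Set.mem_setOf_eq]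
      constructor
      · intro hc
        by_contra hle
        push_neg at hle
        exact (hyAC ℓ hle).2 hc
      · intro hle
        exact hyC ℓ hle
    rw [hset, hμapp]
    have hcong : (∑ ℓ : Fin (k+1),
        ENNReal.ofReal (θ ℓ) * ({ℓ : Fin (k+1) | ℓ ≤ i} : Set (Fin (k+1))).indicator 1 ℓ)
        = ∑ ℓ ∈ Finset.Iic i, ENNReal.ofReal (θ ℓ) := by
      rw [show Finset.Iic i = Finset.univ.filter (fun ℓ => ℓ ≤ i) from by
        ext ℓ; simp [Finset.mem_Iic]]
      rw [Finset.sum_filter]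
      apply Finset.sum_congr rfl
      intro ℓ _
      by_cases h : ℓ ≤ i
      · rw [Set.indicator_of_mem (by exact h), if_pos h, Pi.one_apply, mul_one]
      · rw [Set.indicator_of_notMem (by exact h), if_neg h, mul_zero]
    rw [hcong, ENNReal.toReal_sum (fun ℓ _ => ENNReal.ofReal_ne_top)]
    apply Finset.sum_congr rfl
    intro ℓ _
    rw [ENNReal.toReal_ofReal (hθ0 ℓ)]


lemma hard_direction {d k : ℕ} (A : Set (Fin d → ℝ)) (B : Set (Fin k → ℝ))
    (C : Set (Fin d → ℝ)) (hCA : C ⊆ A) (hC : MeasurableSet C)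
    (f : (Fin d → ℝ) → (Fin k → ℝ)) (hf : Measurable f)
    {Ω : Type} [MeasurableSpace Ω] (μ : Measure Ω) [IsProbabilityMeasure μ]
    (X : Ω → (Fin d → ℝ)) (hX : Measurable X) (hXA : μ {ω | X ω ∈ A} = 1)
    (hXint : Integrable (fun ω => f (X ω)) μ) (hXB : (∫ ω, f (X ω) ∂μ) ∈ B)
    (hp : 0 < (μ {ω | X ω ∈ C}).toReal) :
    ∃ (i : Fin (k+1)) (θ : Fin (k+1) → ℝ) (y : Fin (k+1) → (Fin d → ℝ)),
      (∀ ℓ, 0 ≤ θ ℓ) ∧ (∀ ℓ, ℓ ≤ i → y ℓ ∈ C) ∧ (∀ ℓ, i < ℓ → y ℓ ∈ A \ C) ∧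
      (∑ ℓ, θ ℓ) = 1 ∧ (∑ ℓ, θ ℓ • f (y ℓ)) ∈ B ∧
      (μ {ω | X ω ∈ C}).toReal ≤ ∑ ℓ ∈ Finset.Iic i, θ ℓ := by
  classical
  set p := (μ {ω | X ω ∈ C}).toReal with hpdef
  set b := ∫ ω, f (X ω) ∂μ with hbdef
  set g : (Fin d → ℝ) → (Fin (k+1) → ℝ) :=
    fun x => Fin.snoc (f x) (if x ∈ C then (1:ℝ) else 0) with hg
  have hgmeas : Measurable g := by
    rw [measurable_pi_iff]
    intro j
    induction j using Fin.lastCases with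
    | last =>
      have heq : (fun x => g x (Fin.last k)) = C.indicator (fun _ => (1:ℝ)) := by
        funext x
        simp only [hg, Fin.snoc_last, Set.indicator_apply]
      rw [heq]
      exact measurable_const.indicator hC
    | cast j' =>
      have heq : (fun x => g x (Fin.castSucc j')) = fun x => f x j' := by
        funext x
        simp only [hg, Fin.snoc_castSucc]
      rw [heq]
      exact (measurable_pi_apply j').comp hf
  set Z : Ω → (Fin (k+1) → ℝ) := fun ω => g (X ω) with hZ
  have hZmeas : Measurable Z := hgmeas.comp hX
  have hZint : Integrable Z μ := by
    apply Integrable.mono' (hXint.norm.add (integrable_const 1))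
      hZmeas.aestronglyMeasurable
    apply Filter.Eventually.of_forall
    intro ω
    have hb0 : (0:ℝ) ≤ ‖f (X ω)‖ + 1 := by positivity
    simp only [Pi.add_apply]
    rw [pi_norm_le_iff_of_nonneg hb0]
    intro j
    induction j using Fin.lastCases with
    | last =>
      have : Z ω (Fin.last k) = if X ω ∈ C then (1:ℝ) else 0 := by
        simp only [hZ, hg, Fin.snoc_last]
      rw [this]
      by_cases h : X ω ∈ C
      · rw [if_pos h]
        have := norm_nonneg (f (X ω))
        rw [norm_one]
        linarith
      · rw [if_neg h]
        have := norm_nonneg (f (X ω))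
        simp only [norm_zero]
        linarith
    | cast j' =>
      have : Z ω (Fin.castSucc j') = f (X ω) j' := by
        simp only [hZ, hg, Fin.snoc_castSucc]
      rw [this]
      have := norm_le_pi_norm (f (X ω)) j'
      linarith
  have hproj : ∀ j : Fin (k+1), (∫ ω, Z ω ∂μ) j = ∫ ω, Z ω j ∂μ := by
    intro j
    exact ((ContinuousLinearMap.proj (R := ℝ) (φ := fun _ : Fin (k+1) => ℝ)
      j).integral_comp_comm hZint).symm
  have hmlast : (∫ ω, Z ω ∂μ) (Fin.last k) = p := by
    rw [hproj]
    have heq : (fun ω => Z ω (Fin.last k))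
        = fun ω => (X ⁻¹' C).indicator (fun _ => (1:ℝ)) ω := by
      funext ω
      simp only [hZ, hg, Fin.snoc_last, Set.indicator_apply, Set.mem_preimage]
    rw [heq, integral_indicator_const (1:ℝ) (hX hC), smul_eq_mul, mul_one]
    rfl
  have hmcast : ∀ j' : Fin k, (∫ ω, Z ω ∂μ) (Fin.castSucc j') = b j' := by
    intro j'
    rw [hproj]
    have h1 : (fun ω => Z ω (Fin.castSucc j')) = fun ω => f (X ω) j' := by
      funext ω
      simp only [hZ, hg, Fin.snoc_castSucc]
    have h2 : b j' = ∫ ω, f (X ω) j' ∂μ :=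
      ((ContinuousLinearMap.proj (R := ℝ) (φ := fun _ : Fin k => ℝ)
        j').integral_comp_comm hXint).symm
    rw [h1, h2]
  have hmean := mean_mem_convexHull (μ := μ) hZmeas hZint hXA
  have hsub : Z '' {ω | X ω ∈ A} ⊆ g '' A := by
    rintro _ ⟨ω, hω, rfl⟩
    exact ⟨X ω, hω, rfl⟩
  have hm2 : (∫ ω, Z ω ∂μ) ∈ convexHull ℝ (g '' A) := convexHull_mono hsub hmean
  obtain ⟨θ0, z, hθ00, hzT, hθ01, hcoord, hlast⟩ := caratheodory_slide (g '' A) _ hm2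
  have hex : ∀ j, ∃ x, x ∈ A ∧ g x = z j := fun j => (hzT j)
  choose y0 hy0A hy0z using hex
  have hfy : ∀ j j', f (y0 j) j' = z j (Fin.castSucc j') := by
    intro j j'
    rw [← hy0z j]
    simp only [hg, Fin.snoc_castSucc]
  have hylast : ∀ j, z j (Fin.last k) = if y0 j ∈ C then (1:ℝ) else 0 := by
    intro j
    rw [← hy0z j]
    simp only [hg, Fin.snoc_last]
  have happly : ∀ i0 : Fin (k+1), (∑ j, θ0 j • z j) i0 = ∑ j, θ0 j * z j i0 := by
    intro i0
    rw [Finset.sum_apply]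
    apply Finset.sum_congr rfl
    intro j _
    simp [Pi.smul_apply, smul_eq_mul]
  have hbary : (∑ j, θ0 j • f (y0 j)) = b := by
    funext j'
    have h1 : (∑ j, θ0 j • f (y0 j)) j' = ∑ j, θ0 j * f (y0 j) j' := by
      rw [Finset.sum_apply]
      apply Finset.sum_congr rfl
      intro j _
      simp [Pi.smul_apply, smul_eq_mul]
    rw [h1]
    have h3 := hcoord (Fin.castSucc j') (Fin.castSucc_lt_last j').ne
    rw [happly] at h3
    rw [show (∑ j, θ0 j * f (y0 j) j') = ∑ j, θ0 j * z j (Fin.castSucc j') from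
      Finset.sum_congr rfl (fun j _ => by rw [hfy])]
    rw [h3, hmcast]
  set J := Finset.univ.filter (fun j => y0 j ∈ C) with hJdef
  have hq : (∑ j ∈ J, θ0 j) = (∑ j, θ0 j • z j) (Fin.last k) := by
    rw [happly, hJdef, Finset.sum_filter]
    apply Finset.sum_congr rfl
    intro j _
    rw [hylast j]
    by_cases h : y0 j ∈ C
    · rw [if_pos h, if_pos h, mul_one]
    · rw [if_neg h, if_neg h, mul_zero]
  have hpq : p ≤ ∑ j ∈ J, θ0 j := by
    rw [hq, ← hmlast]
    exact hlast
  have hJne : J.Nonempty := by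
    rcases J.eq_empty_or_nonempty with h | h
    · exfalso
      rw [h, Finset.sum_empty] at hpq
      linarith
    · exact h
  obtain ⟨i, σ, hbij, hc1, hc2, hc3⟩ := sort_perm A C θ0 y0 (fun j => hy0A j) hJne
  refine ⟨i, θ0 ∘ σ, y0 ∘ σ, fun ℓ => hθ00 _, hc1, hc2, ?_, ?_, ?_⟩
  · rw [← hθ01]
    exact Fintype.sum_bijective σ hbij _ _ (fun ℓ => rfl)
  · rw [show (∑ ℓ, (θ0 ∘ σ) ℓ • f ((y0 ∘ σ) ℓ)) = ∑ j, θ0 j • f (y0 j) from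
      Fintype.sum_bijective σ hbij _ _ (fun ℓ => rfl), hbary]
    exact hXB
  · exact hpq.trans (le_of_eq hc3.symm)

end Aux

/-- The supremum of `Pr{X ∈ C}` over all random vectors `X` with `Pr{X ∈ A} = 1` and
`E[f(X)] ∈ B` equals the maximum over `i ∈ {1,…,k+1}` of the suprema `P i` over convex
combinations of `k+1` points, the first `i` of which lie in `C` and the rest in `A \ C`,
with `f`-barycenter in `B`, of the total weight of the first `i` points.
Here `i : Fin (k+1)` encodes the index `i + 1 ∈ {1,…,k+1}`. -/
theorem statement3 {d k : ℕ}
    (A : Set (Fin d → ℝ)) (B : Set (Fin k → ℝ)) (C : Set (Fin d → ℝ))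
    (hCA : C ⊆ A) (hC : MeasurableSet C)
    (f : (Fin d → ℝ) → (Fin k → ℝ)) (hf : Measurable f) :
    sSup { p : ℝ | ∃ (Ω : Type) (_ : MeasurableSpace Ω) (μ : Measure Ω),
        IsProbabilityMeasure μ ∧ ∃ X : Ω → (Fin d → ℝ), Measurable X ∧
        μ {ω | X ω ∈ A} = 1 ∧ Integrable (fun ω => f (X ω)) μ ∧
        (∫ ω, f (X ω) ∂μ) ∈ B ∧ p = (μ {ω | X ω ∈ C}).toReal }
    = ⨆ i : Fin (k + 1), sSup { p : ℝ |
      ∃ (θ : Fin (k + 1) → ℝ) (y : Fin (k + 1) → (Fin d → ℝ)),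
        (∀ ℓ, 0 ≤ θ ℓ) ∧ (∀ ℓ, ℓ ≤ i → y ℓ ∈ C) ∧ (∀ ℓ, i < ℓ → y ℓ ∈ A \ C) ∧
        (∑ ℓ, θ ℓ) = 1 ∧ (∑ ℓ, θ ℓ • f (y ℓ)) ∈ B ∧
        p = ∑ ℓ ∈ Finset.Iic i, θ ℓ } := by
  classical
  set S : Fin (k+1) → Set ℝ := fun i => { p : ℝ |
      ∃ (θ : Fin (k + 1) → ℝ) (y : Fin (k + 1) → (Fin d → ℝ)),
        (∀ ℓ, 0 ≤ θ ℓ) ∧ (∀ ℓ, ℓ ≤ i → y ℓ ∈ C) ∧ (∀ ℓ, i < ℓ → y ℓ ∈ A \ C) ∧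
        (∑ ℓ, θ ℓ) = 1 ∧ (∑ ℓ, θ ℓ • f (y ℓ)) ∈ B ∧
        p = ∑ ℓ ∈ Finset.Iic i, θ ℓ } with hS
  have hSnonneg : ∀ i, ∀ q ∈ S i, 0 ≤ q := by
    rintro i q ⟨θ, y, hθ0, _, _, _, _, rfl⟩
    exact Finset.sum_nonneg (fun ℓ _ => hθ0 ℓ)
  have hSbdd : ∀ i, BddAbove (S i) := by
    intro i
    refine ⟨1, ?_⟩
    rintro q ⟨θ, y, hθ0, _, _, hθ1, _, rfl⟩
    rw [← hθ1]
    exact Finset.sum_le_sum_of_subset_of_nonneg (Finset.subset_univ _)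
      (fun j _ _ => hθ0 j)
  have hRHS0 : 0 ≤ ⨆ i, sSup (S i) :=
    Real.iSup_nonneg (fun i => Real.sSup_nonneg (hSnonneg i))
  have hRange : BddAbove (Set.range fun i => sSup (S i)) :=
    Set.Finite.bddAbove (Set.finite_range _)
  apply le_antisymm
  · apply Real.sSup_le _ hRHS0
    rintro p ⟨Ω, mΩ, μ, hprob, X, hX, hXA, hXint, hXB, hp⟩
    letI := mΩ
    haveI := hprob
    rcases eq_or_lt_of_le (ENNReal.toReal_nonneg : (0:ℝ) ≤ (μ {ω | X ω ∈ C}).toReal)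
      with h0 | h0
    · rw [hp, ← h0]
      exact hRHS0
    · obtain ⟨i, θ, y, c1, c2, c3, c4, c5, c6⟩ :=
        hard_direction A B C hCA hC f hf μ X hX hXA hXint hXB h0
      have hmem : (∑ ℓ ∈ Finset.Iic i, θ ℓ) ∈ S i := ⟨θ, y, c1, c2, c3, c4, c5, rfl⟩
      calc p = (μ {ω | X ω ∈ C}).toReal := hp
        _ ≤ ∑ ℓ ∈ Finset.Iic i, θ ℓ := c6
        _ ≤ sSup (S i) := le_csSup (hSbdd i) hmem
        _ ≤ ⨆ i, sSup (S i) := le_ciSup hRange i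
  · apply ciSup_le
    intro i
    have hLbdd : BddAbove { p : ℝ | ∃ (Ω : Type) (_ : MeasurableSpace Ω) (μ : Measure Ω),
        IsProbabilityMeasure μ ∧ ∃ X : Ω → (Fin d → ℝ), Measurable X ∧
        μ {ω | X ω ∈ A} = 1 ∧ Integrable (fun ω => f (X ω)) μ ∧
        (∫ ω, f (X ω) ∂μ) ∈ B ∧ p = (μ {ω | X ω ∈ C}).toReal } := by
      refine ⟨1, ?_⟩
      rintro p ⟨Ω, mΩ, μ, hprob, X, hX, hXA, hXint, hXB, hp⟩
      letI := mΩ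
      haveI := hprob
      rw [hp]
      have h1 : μ {ω | X ω ∈ C} ≤ 1 := prob_le_one
      have := ENNReal.toReal_mono (by simp) h1
      simpa using this
    have hLnonneg : 0 ≤ sSup { p : ℝ | ∃ (Ω : Type) (_ : MeasurableSpace Ω)
        (μ : Measure Ω),
        IsProbabilityMeasure μ ∧ ∃ X : Ω → (Fin d → ℝ), Measurable X ∧
        μ {ω | X ω ∈ A} = 1 ∧ Integrable (fun ω => f (X ω)) μ ∧
        (∫ ω, f (X ω) ∂μ) ∈ B ∧ p = (μ {ω | X ω ∈ C}).toReal } := by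
      apply Real.sSup_nonneg
      rintro p ⟨Ω, mΩ, μ, hprob, X, hX, hXA, hXint, hXB, hp⟩
      rw [hp]
      exact ENNReal.toReal_nonneg
    apply Real.sSup_le _ hLnonneg
    rintro q ⟨θ, y, hθ0, hyC, hyAC, hθ1, hB, rfl⟩
    apply le_csSup hLbdd
    obtain ⟨Ω, mΩ, ν, hprob, X, hX, h1, h2, h3, h4⟩ :=
      discrete_member A B C f i θ y hθ0 hyC hyAC hCA hθ1 hB
    exact ⟨Ω, mΩ, ν, hprob, X, hX, h1, h2, h3, h4⟩
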